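/- Let θ₁ > 0 and θ₂ > 0, and let g(x;θ₁) = (θ₁/(θ₁+3))·(2+θ₁+θ₁x)·e^{-θ₁x} and G(x;θ₂) = 1 − (1 + θ₂x/(θ₂+3))·e^{-θ₂x}. Then the stress-strength reliability R = ∫₀^∞ g(x;θ₁)·G(x;θ₂) dx equals 1 − θ₁·[(θ₁θ₂+3θ₁+2θ₂+6)(θ₁+θ₂)² + (2θ₁θ₂+3θ₁+2θ₂)(θ₁+θ₂) + 2θ₁θ₂] / ((θ₁+3)(θ₂+3)(θ₁+θ₂)³). -/

import Mathlib

open Real Set MeasureTheory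

lemma intOn_pow (n : ℕ) {s : ℝ} (hs : 0 < s) :
    IntegrableOn (fun x : ℝ => x ^ n * Real.exp (-(s * x))) (Ioi 0) := by
  have h := integrableOn_rpow_mul_exp_neg_mul_rpow (p := 1) (s := (n : ℝ)) (b := s)
    (lt_of_lt_of_le neg_one_lt_zero (Nat.cast_nonneg n)) one_pos hs
  refine h.congr_fun (fun x hx => ?_) measurableSet_Ioi
  beta_reduce
  rw [Real.rpow_natCast, Real.rpow_one, neg_mul]

lemma int_pow (n : ℕ) {s : ℝ} (hs : 0 < s) :
    ∫ x in Ioi (0:ℝ), x ^ n * Real.exp (-(s * x)) = n.factorial / s ^ (n + 1) := by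
  have h := Real.integral_rpow_mul_exp_neg_mul_Ioi (a := (n : ℝ) + 1) (r := s)
    (by positivity) hs
  rw [show ((n:ℝ) + 1 - 1) = (n:ℝ) by ring] at h
  have e1 : ∫ x in Ioi (0:ℝ), x ^ n * Real.exp (-(s * x))
      = ∫ t in Ioi (0:ℝ), t ^ ((n:ℝ)) * Real.exp (-(s * t)) := by
    refine setIntegral_congr_fun measurableSet_Ioi (fun x hx => ?_)
    rw [Real.rpow_natCast]
  rw [e1, h, Real.Gamma_nat_eq_factorial,
    show ((n:ℝ) + 1) = ((n + 1 : ℕ) : ℝ) by push_cast; ring, Real.rpow_natCast]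
  rw [div_pow, one_pow]
  ring

lemma intOn_quad (a b c : ℝ) {s : ℝ} (hs : 0 < s) :
    IntegrableOn (fun x : ℝ => (a + b * x + c * x ^ 2) * Real.exp (-(s * x))) (Ioi 0) := by
  have h : IntegrableOn (fun x : ℝ => a * (x ^ 0 * Real.exp (-(s * x)))
      + b * (x ^ 1 * Real.exp (-(s * x))) + c * (x ^ 2 * Real.exp (-(s * x)))) (Ioi 0) :=
    (((intOn_pow 0 hs).const_mul a).add ((intOn_pow 1 hs).const_mul b)).add
      ((intOn_pow 2 hs).const_mul c)
  refine h.congr_fun (fun x _ => ?_) measurableSet_Ioi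
  simp; ring

lemma int_quad (a b c : ℝ) {s : ℝ} (hs : 0 < s) :
    ∫ x in Ioi (0:ℝ), (a + b * x + c * x ^ 2) * Real.exp (-(s * x))
      = a / s + b / s ^ 2 + 2 * c / s ^ 3 := by
  have e : ∀ x : ℝ, (a + b * x + c * x ^ 2) * Real.exp (-(s * x))
      = a * (x ^ 0 * Real.exp (-(s * x))) + b * (x ^ 1 * Real.exp (-(s * x)))
        + c * (x ^ 2 * Real.exp (-(s * x))) := by intro x; ring
  simp_rw [e]
  have h1 : IntegrableOn (fun x : ℝ => a * (x ^ 0 * Real.exp (-(s * x)))) (Ioi 0) :=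
    (intOn_pow 0 hs).const_mul a
  have h2 : IntegrableOn (fun x : ℝ => b * (x ^ 1 * Real.exp (-(s * x)))) (Ioi 0) :=
    (intOn_pow 1 hs).const_mul b
  have h3 : IntegrableOn (fun x : ℝ => c * (x ^ 2 * Real.exp (-(s * x)))) (Ioi 0) :=
    (intOn_pow 2 hs).const_mul c
  have h12 : IntegrableOn (fun x : ℝ => a * (x ^ 0 * Real.exp (-(s * x)))
      + b * (x ^ 1 * Real.exp (-(s * x)))) (Ioi 0) := h1.add h2
  rw [integral_add h12 h3, integral_add h1 h2,
    MeasureTheory.integral_const_mul, MeasureTheory.integral_const_mul, MeasureTheory.integral_const_mul,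
    int_pow 0 hs, int_pow 1 hs, int_pow 2 hs]
  norm_num
  ring

/-- Stress-strength reliability of two independent i-Garima variables:
R = ∫₀^∞ g(x;θ₁)·G(x;θ₂) dx
  = 1 − θ₁[(θ₁θ₂+3θ₁+2θ₂+6)(θ₁+θ₂)² + (2θ₁θ₂+3θ₁+2θ₂)(θ₁+θ₂) + 2θ₁θ₂]
        / ((θ₁+3)(θ₂+3)(θ₁+θ₂)³). -/
theorem iGarima_stress_strength (θ₁ θ₂ : ℝ) (hθ₁ : 0 < θ₁) (hθ₂ : 0 < θ₂) :
    ∫ x in Set.Ioi (0 : ℝ),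
        ((θ₁ / (θ₁ + 3)) * (2 + θ₁ + θ₁ * x) * Real.exp (-θ₁ * x))
          * (1 - (1 + θ₂ * x / (θ₂ + 3)) * Real.exp (-θ₂ * x))
      = 1 - θ₁ * ((θ₁ * θ₂ + 3 * θ₁ + 2 * θ₂ + 6) * (θ₁ + θ₂) ^ 2
              + (2 * θ₁ * θ₂ + 3 * θ₁ + 2 * θ₂) * (θ₁ + θ₂)
              + 2 * θ₁ * θ₂)
            / ((θ₁ + 3) * (θ₂ + 3) * (θ₁ + θ₂) ^ 3) := by
  have hs : 0 < θ₁ + θ₂ := by linarith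
  have h13 : (θ₁ + 3) ≠ 0 := by linarith
  have h23 : (θ₂ + 3) ≠ 0 := by linarith
  set c := θ₁ / (θ₁ + 3)
  set d := θ₂ / (θ₂ + 3)
  have e : ∀ x : ℝ,
      ((θ₁ / (θ₁ + 3)) * (2 + θ₁ + θ₁ * x) * Real.exp (-θ₁ * x))
        * (1 - (1 + θ₂ * x / (θ₂ + 3)) * Real.exp (-θ₂ * x))
      = (c * (2 + θ₁) + c * θ₁ * x + 0 * x ^ 2) * Real.exp (-(θ₁ * x))
        - ((c * (2 + θ₁)) + (c * θ₁ + c * (2 + θ₁) * d) * x + c * θ₁ * d * x ^ 2)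
            * Real.exp (-((θ₁ + θ₂) * x)) := by
    intro x
    have : Real.exp (-((θ₁ + θ₂) * x)) = Real.exp (-(θ₁ * x)) * Real.exp (-(θ₂ * x)) := by
      rw [← Real.exp_add]; ring_nf
    rw [this]
    have hd : θ₂ * x / (θ₂ + 3) = d * x := by rw [div_mul_eq_mul_div, mul_comm]
    rw [hd, neg_mul, neg_mul]
    ring
  simp_rw [show θ₁ / (θ₁ + 3) = c from rfl] at e
  simp_rw [e]
  rw [integral_sub (intOn_quad _ _ _ hθ₁) (intOn_quad _ _ _ hs),
    int_quad _ _ _ hθ₁, int_quad _ _ _ hs]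
  have hθ₁' : θ₁ ≠ 0 := ne_of_gt hθ₁
  have hs' : θ₁ + θ₂ ≠ 0 := ne_of_gt hs
  show c * (2 + θ₁) / θ₁ + c * θ₁ / θ₁ ^ 2 + 2 * 0 / θ₁ ^ 3 - _ = _
  simp only [c, d]
  field_simp [c, d]
  ring
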